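/- arXiv:1009.1799 — 3 statements merged into one kernel-verified Lean document; each statement's English description precedes it below -/
import Mathlib

section
/- If $f:\mathbb{R}\to\mathbb{R}$ is an increasing homeomorphism that is $M$-quasisymmetric (i.e. $M^{-1}\le |f(I)|/|f(J)|\le M$ for all adjacent intervals $I,J$ of equal length), then for all pairs of intervals $J\subset I$ one has $(1+M)^{-2}(|J|/|I|)^q \le |f(J)|/|f(I)| \le 4(|J|/|I|)^p$, where $p=\log_2(1+M^{-1})$ and $q=\log_2(1+M)$. -/
open Real

lemma wu_half (M : ℝ) (hM : 1 ≤ M) (f : ℝ → ℝ) (hmono : StrictMono f)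
    (hqs : ∀ x h : ℝ, 0 < h →
      M⁻¹ ≤ (f (x + h) - f x) / (f x - f (x - h)) ∧
      (f (x + h) - f x) / (f x - f (x - h)) ≤ M)
    (u w : ℝ) (huw : u < w) :
    ((1+M)⁻¹ * (f w - f u) ≤ f ((u+w)/2) - f u ∧
      f ((u+w)/2) - f u ≤ (1+M⁻¹)⁻¹ * (f w - f u)) ∧
    ((1+M)⁻¹ * (f w - f u) ≤ f w - f ((u+w)/2) ∧
      f w - f ((u+w)/2) ≤ (1+M⁻¹)⁻¹ * (f w - f u)) := by
  have hM0 : (0:ℝ) < M := lt_of_lt_of_le one_pos hM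
  have hMi : (0:ℝ) < M⁻¹ := inv_pos.2 hM0
  set m := (u+w)/2 with hm
  have h0 : (0:ℝ) < (w-u)/2 := by linarith
  have hqm := hqs m ((w-u)/2) h0
  have e1 : m + (w-u)/2 = w := by rw [hm]; ring
  have e2 : m - (w-u)/2 = u := by rw [hm]; ring
  rw [e1, e2] at hqm
  have hD : 0 < f m - f u := sub_pos.2 (hmono (by rw [hm]; linarith))
  have hN : 0 < f w - f m := sub_pos.2 (hmono (by rw [hm]; linarith))
  obtain ⟨h1, h2⟩ := hqm
  rw [le_div_iff₀ hD] at h1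
  rw [div_le_iff₀ hD] at h2
  constructor <;> constructor
  · rw [inv_mul_le_iff₀ (by linarith)]; nlinarith
  · rw [le_inv_mul_iff₀ (by positivity)]; nlinarith [mul_le_mul_of_nonneg_left h1 hM0.le, mul_inv_cancel₀ hM0.ne']
  · rw [inv_mul_le_iff₀ (by linarith)]; nlinarith [mul_le_mul_of_nonneg_left h2 hMi.le, inv_mul_cancel₀ hM0.ne']
  · have key : M⁻¹ * (f w - f m) ≤ f m - f u := by
      have h3 := mul_le_mul_of_nonneg_left h2 hMi.le
      rwa [← mul_assoc, inv_mul_cancel₀ hM0.ne', one_mul] at h3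
    rw [le_inv_mul_iff₀ (by positivity)]; linarith

lemma wu_dyadic (M : ℝ) (hM : 1 ≤ M) (f : ℝ → ℝ) (hmono : StrictMono f)
    (hqs : ∀ x h : ℝ, 0 < h →
      M⁻¹ ≤ (f (x + h) - f x) / (f x - f (x - h)) ∧
      (f (x + h) - f x) / (f x - f (x - h)) ≤ M)
    (n : ℕ) (x y : ℝ) (hxy : x < y) (k : ℕ) (hk : k < 2^n) :
    ((1+M)⁻¹)^n * (f y - f x) ≤
        f (x + (k+1) * (y-x)/2^n) - f (x + k * (y-x)/2^n) ∧
    f (x + (k+1) * (y-x)/2^n) - f (x + k * (y-x)/2^n) ≤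
        ((1+M⁻¹)⁻¹)^n * (f y - f x) := by
  induction n generalizing k with
  | zero =>
    interval_cases k
    norm_num
  | succ n ih =>
    have hM0 : (0:ℝ) < M := lt_of_lt_of_le one_pos hM
    set j := k / 2 with hj
    have hj2 : j < 2^n := by
      have : 2^(n+1) = 2 * 2^n := by ring
      omega
    set u := x + j * (y-x)/2^n with hu
    set w := x + (j+1) * (y-x)/2^n with hw
    have huw : u < w := by
      rw [hu, hw]
      have hd : (0:ℝ) < (y-x)/2^n := div_pos (by linarith) (by positivity)
      have h1 : (j:ℝ) * ((y-x)/2^n) < ((j:ℝ)+1) * ((y-x)/2^n) :=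
        mul_lt_mul_of_pos_right (by linarith) hd
      rw [mul_div_assoc, mul_div_assoc]
      linarith
    obtain ⟨ihl, ihr⟩ := ih j hj2
    obtain ⟨⟨hl1, hl2⟩, ⟨hr1, hr2⟩⟩ := wu_half M hM f hmono hqs u w huw
    have hmid : (u+w)/2 = x + (2*j+1) * (y-x)/2^(n+1) := by
      rw [hu, hw]; push_cast; ring
    have hμ : (0:ℝ) < (1+M)⁻¹ := by positivity
    have hlam : (0:ℝ) < (1+M⁻¹)⁻¹ := by positivity
    have hT : 0 < f y - f x := sub_pos.2 (hmono hxy)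
    rcases Nat.even_or_odd k with ⟨m, hm⟩ | ⟨m, hm⟩
    · -- k = 2j, child = [u, mid]
      have hkj : k = 2*j := by omega
      have e1 : x + (↑k+1) * (y-x)/2^(n+1) = (u+w)/2 := by
        rw [hmid, hkj]; push_cast; ring
      have e2 : x + ↑k * (y-x)/2^(n+1) = u := by
        rw [hu, hkj]; push_cast; ring
      rw [e1, e2]
      constructor
      · calc ((1+M)⁻¹)^(n+1) * (f y - f x) = (1+M)⁻¹ * (((1+M)⁻¹)^n * (f y - f x)) := by ring
          _ ≤ (1+M)⁻¹ * (f w - f u) := by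
              apply mul_le_mul_of_nonneg_left ihl hμ.le
          _ ≤ f ((u+w)/2) - f u := hl1
      · calc f ((u+w)/2) - f u ≤ (1+M⁻¹)⁻¹ * (f w - f u) := hl2
          _ ≤ (1+M⁻¹)⁻¹ * (((1+M⁻¹)⁻¹)^n * (f y - f x)) := by
              apply mul_le_mul_of_nonneg_left ihr hlam.le
          _ = ((1+M⁻¹)⁻¹)^(n+1) * (f y - f x) := by ring
    · -- k = 2j+1, child = [mid, w]
      have hkj : k = 2*j+1 := by omega
      have e1 : x + (↑k+1) * (y-x)/2^(n+1) = w := by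
        rw [hw, hkj]; push_cast; ring
      have e2 : x + ↑k * (y-x)/2^(n+1) = (u+w)/2 := by
        rw [hmid, hkj]; push_cast; ring
      rw [e1, e2]
      constructor
      · calc ((1+M)⁻¹)^(n+1) * (f y - f x) = (1+M)⁻¹ * (((1+M)⁻¹)^n * (f y - f x)) := by ring
          _ ≤ (1+M)⁻¹ * (f w - f u) := by
              apply mul_le_mul_of_nonneg_left ihl hμ.le
          _ ≤ f w - f ((u+w)/2) := hr1
      · calc f w - f ((u+w)/2) ≤ (1+M⁻¹)⁻¹ * (f w - f u) := hr2
          _ ≤ (1+M⁻¹)⁻¹ * (((1+M⁻¹)⁻¹)^n * (f y - f x)) := by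
              apply mul_le_mul_of_nonneg_left ihr hlam.le
          _ = ((1+M⁻¹)⁻¹)^(n+1) * (f y - f x) := by ring

-- conversion: ((2^r)⁻¹)^n = (1/2^n)^r
lemma wu_conv (r : ℝ) (n : ℕ) : (((2:ℝ)^r)⁻¹)^n = ((1:ℝ)/2^n)^r := by
  rw [one_div, ← Real.rpow_neg (by norm_num : (0:ℝ) ≤ 2) r,
      ← Real.rpow_natCast ((2:ℝ)^(-r)) n, ← Real.rpow_natCast (2:ℝ) n,
      ← Real.rpow_neg (by norm_num : (0:ℝ) ≤ 2) (n:ℝ),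
      ← Real.rpow_mul (by norm_num : (0:ℝ) ≤ 2), ← Real.rpow_mul (by norm_num : (0:ℝ) ≤ 2)]
  congr 1
  ring

set_option maxHeartbeats 1000000 in
/-- Wu's lemma: an increasing `M`-quasisymmetric homeomorphism of ℝ satisfies
`(1+M)⁻² (|J|/|I|)^q ≤ |f(J)|/|f(I)| ≤ 4 (|J|/|I|)^p` for all intervals `J ⊆ I`,
where `p = log₂(1+M⁻¹)` and `q = log₂(1+M)`. Intervals are given by endpoints:
`I = [a,b]`, `J = [c,d]` with `a ≤ c ≤ d ≤ b`, `c < d`. -/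
theorem stmt0 (M : ℝ) (hM : 1 ≤ M) (f : ℝ → ℝ)
    (hmono : StrictMono f) (hcont : Continuous f) (hsurj : Function.Surjective f)
    (hqs : ∀ x h : ℝ, 0 < h →
      M⁻¹ ≤ (f (x + h) - f x) / (f x - f (x - h)) ∧
      (f (x + h) - f x) / (f x - f (x - h)) ≤ M)
    (a b c d : ℝ) (hac : a ≤ c) (hcd : c < d) (hdb : d ≤ b) :
    (1 + M)⁻¹ ^ (2 : ℕ) * ((d - c) / (b - a)) ^ (Real.logb 2 (1 + M)) ≤
        (f d - f c) / (f b - f a) ∧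
    (f d - f c) / (f b - f a) ≤ 4 * ((d - c) / (b - a)) ^ (Real.logb 2 (1 + M⁻¹)) := by
  have hM0 : (0:ℝ) < M := lt_of_lt_of_le one_pos hM
  have hMi0 : (0:ℝ) < M⁻¹ := inv_pos.2 hM0
  have hMi1 : M⁻¹ ≤ 1 := by rw [inv_le_one_iff₀]; right; exact hM
  have hab : a < b := lt_of_le_of_lt hac (lt_of_lt_of_le hcd hdb)
  have hba : (0:ℝ) < b - a := by linarith
  have hT : 0 < f b - f a := sub_pos.2 (hmono hab)
  have hJ : 0 < f d - f c := sub_pos.2 (hmono hcd)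
  set t := (d - c)/(b - a) with htdef
  have ht0 : 0 < t := div_pos (by linarith) hba
  have ht1 : t ≤ 1 := (div_le_one hba).2 (by linarith)
  set p := Real.logb 2 (1 + M⁻¹) with hpdef
  set q := Real.logb 2 (1 + M) with hqdef
  have h2p : (2:ℝ)^p = 1 + M⁻¹ := Real.rpow_logb two_pos (by norm_num) (by positivity)
  have h2q : (2:ℝ)^q = 1 + M := Real.rpow_logb two_pos (by norm_num) (by positivity)
  have hp0 : 0 < p := Real.logb_pos one_lt_two (by linarith)
  have hq0 : 0 < q := Real.logb_pos one_lt_two (by linarith)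
  have hp1 : p ≤ 1 := by
    have : (1:ℝ) = Real.logb 2 2 := (Real.logb_self_eq_one one_lt_two).symm
    rw [this, hpdef]
    exact Real.logb_le_logb_of_le one_lt_two (by positivity) (by linarith)
  constructor
  · -- LOWER BOUND
    -- choose n with 1/2^n ≤ t/2 and t/4 ≤ 1/2^n
    obtain ⟨n, hn1, hn2⟩ : ∃ n : ℕ, (1:ℝ)/2^n ≤ t/2 ∧ t/4 ≤ 1/2^n := by
      set s := 2/t with hsdef
      have hs2 : (2:ℝ) ≤ s := by
        rw [hsdef, le_div_iff₀ ht0]; linarith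
      have hceil2 : 2 ≤ ⌈s⌉₊ := by
        have h1 : (2:ℝ) ≤ (⌈s⌉₊:ℝ) := le_trans hs2 (Nat.le_ceil s)
        exact_mod_cast h1
      set n := Nat.clog 2 ⌈s⌉₊ with hndef
      have hn1 : 0 < n := Nat.clog_pos one_lt_two (by omega)
      refine ⟨n, ?_, ?_⟩
      · -- s ≤ 2^n so 1/2^n ≤ 1/s = t/2
        have h1 : (⌈s⌉₊:ℝ) ≤ 2^n := by
          exact_mod_cast Nat.le_pow_clog one_lt_two ⌈s⌉₊
        have h2 : s ≤ 2^n := le_trans (Nat.le_ceil s) h1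
        have hs0 : 0 < s := by linarith
        have h3 : (1:ℝ)/2^n ≤ 1/s := by
          apply one_div_le_one_div_of_le hs0 h2
        calc (1:ℝ)/2^n ≤ 1/s := h3
          _ = t/2 := by rw [hsdef]; field_simp
      · -- 2^(n-1) < s, so 2^n < 2s = 4/t, so t/4 ≤ 1/2^n
        have h1 : 2^(n-1) < ⌈s⌉₊ := Nat.pow_pred_clog_lt_self one_lt_two (by omega)
        have h2 : ((2:ℝ))^(n-1) < s := by
          have h3 : ((2^(n-1) : ℕ):ℝ) + 1 ≤ (⌈s⌉₊:ℝ) := by exact_mod_cast h1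
          have h4 : (⌈s⌉₊:ℝ) < s + 1 := Nat.ceil_lt_add_one (by linarith)
          push_cast at h3
          linarith
        have h5 : (2:ℝ)^n < 2*s := by
          have he : n = (n-1) + 1 := (Nat.succ_pred_eq_of_pos hn1).symm
          rw [he, pow_succ]
          linarith
        have h6 : t * 2^n < 4 := by
          rw [hsdef] at h5
          have h7 : t * (2 * (2/t)) = 4 := by field_simp; try norm_num
          nlinarith [pow_pos (show (0:ℝ) < 2 by norm_num) n]
        rw [div_le_div_iff₀ (by norm_num) (by positivity)]
        linarith
    set δ := (b-a)/2^n with hdd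
    have hδ : 0 < δ := div_pos hba (by positivity)
    have hpow : (0:ℝ) < 2^n := by positivity
    have hbt : (b-a)*t = d-c := by rw [htdef]; field_simp
    have h2δ : 2*δ ≤ d - c := by
      have h1 := mul_le_mul_of_nonneg_left hn1 hba.le
      rw [hdd]
      rw [mul_one_div] at h1
      linarith
    set k := ⌈(c-a)/δ⌉₊ with hkdef
    have hk0 : (0:ℝ) ≤ (c-a)/δ := div_nonneg (by linarith) hδ.le
    have hck : c ≤ a + (k:ℝ)*δ := by
      have h := Nat.le_ceil ((c-a)/δ)
      rw [div_le_iff₀ hδ] at h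
      linarith
    have hkd : a + ((k:ℝ)+1)*δ ≤ d := by
      have h : (k:ℝ) < (c-a)/δ + 1 := Nat.ceil_lt_add_one hk0
      have h2 : (k:ℝ)*δ < c - a + δ := by
        have h3 := mul_lt_mul_of_pos_right h hδ
        rw [add_mul, one_mul, div_mul_cancel₀ _ hδ.ne'] at h3
        exact h3
      linarith
    have hb2 : a + 2^n * δ = b := by rw [hdd]; field_simp; ring
    have hklt : k < 2^n := by
      have h2 : ((k:ℝ)+1)*δ ≤ 2^n * δ := by linarith
      have h3 : (k:ℝ)+1 ≤ 2^n := le_of_mul_le_mul_right h2 hδ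
      have h4 : (k:ℝ) < 2^n := by linarith
      exact_mod_cast h4
    obtain ⟨hdy, -⟩ := wu_dyadic M hM f hmono hqs n a b hab k hklt
    have e1 : a + ((k:ℝ)+1)*(b-a)/2^n = a + ((k:ℝ)+1)*δ := by rw [hdd, mul_div_assoc]
    have e2 : a + (k:ℝ)*(b-a)/2^n = a + (k:ℝ)*δ := by rw [hdd, mul_div_assoc]
    rw [e1, e2] at hdy
    have hfd : ((1+M)⁻¹)^n * (f b - f a) ≤ f d - f c := by
      have m1 : f (a + ((k:ℝ)+1)*δ) ≤ f d := hmono.monotone hkd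
      have m2 : f c ≤ f (a + (k:ℝ)*δ) := hmono.monotone hck
      linarith
    have hμconv : ((1+M)⁻¹)^n = ((1:ℝ)/2^n)^q := by rw [← h2q]; exact wu_conv q n
    have h4q : (1+M)⁻¹^(2:ℕ) * t^q = (t/4)^q := by
      rw [Real.div_rpow ht0.le (by norm_num)]
      have h4 : (4:ℝ)^q = (1+M)^(2:ℕ) := by
        rw [show (4:ℝ) = 2^(2:ℕ) by norm_num, ← Real.rpow_natCast (2:ℝ) 2,
          ← Real.rpow_mul (by norm_num), mul_comm, Real.rpow_mul (by norm_num), h2q,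
          Real.rpow_natCast]
      rw [h4, inv_pow]
      ring
    have hs : (1+M)⁻¹^(2:ℕ) * t^q ≤ ((1+M)⁻¹)^n := by
      rw [h4q, hμconv]
      exact Real.rpow_le_rpow (by positivity) hn2 hq0.le
    rw [le_div_iff₀ hT]
    calc (1+M)⁻¹^(2:ℕ) * t^q * (f b - f a) ≤ ((1+M)⁻¹)^n * (f b - f a) :=
          mul_le_mul_of_nonneg_right hs hT.le
      _ ≤ f d - f c := hfd
  · -- UPPER BOUND
    obtain ⟨n, hn1, hn2⟩ : ∃ n : ℕ, (1:ℝ)/2^(n+1) < t ∧ t ≤ 1/2^n := by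
      set s := 1/t with hsdef
      have hs1 : (1:ℝ) ≤ s := by rw [hsdef, le_div_iff₀ ht0]; linarith
      have hf1 : 1 ≤ ⌊s⌋₊ := Nat.le_floor (by exact_mod_cast hs1)
      set n := Nat.log 2 ⌊s⌋₊ with hndef
      refine ⟨n, ?_, ?_⟩
      · have h1 : ⌊s⌋₊ < 2^(n+1) := Nat.lt_pow_succ_log_self one_lt_two _
        have h2 : s < 2^(n+1) := by
          have h3 : (⌊s⌋₊:ℝ) + 1 ≤ (2:ℝ)^(n+1) := by exact_mod_cast h1
          have h4 : s < ⌊s⌋₊ + 1 := Nat.lt_floor_add_one s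
          linarith
        have h5 : (1:ℝ)/2^(n+1) < 1/s := one_div_lt_one_div_of_lt (by linarith) h2
        have h6 : (1:ℝ)/s = t := by rw [hsdef, one_div_one_div]
        linarith
      · have h1 : (2:ℝ)^n ≤ s := by
          have h0 := Nat.pow_log_le_self 2 (by omega : ⌊s⌋₊ ≠ 0)
          calc (2:ℝ)^n ≤ (⌊s⌋₊:ℝ) := by exact_mod_cast h0
            _ ≤ s := Nat.floor_le (by linarith)
        rw [show t = 1/s by rw [hsdef, one_div_one_div]]
        exact one_div_le_one_div_of_le (by positivity) h1
    set δ := (b-a)/2^n with hdd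
    have hδ : 0 < δ := div_pos hba (by positivity)
    have hpow : (0:ℝ) < 2^n := by positivity
    have hbt : (b-a)*t = d-c := by rw [htdef]; field_simp
    have hdc : d - c ≤ δ := by
      have h1 := mul_le_mul_of_nonneg_left hn2 hba.le
      rw [hdd]
      rw [mul_one_div] at h1
      linarith
    set k := ⌊(c-a)/δ⌋₊ with hkdef
    have hk0 : (0:ℝ) ≤ (c-a)/δ := div_nonneg (by linarith) hδ.le
    have hck : a + (k:ℝ)*δ ≤ c := by
      have h := Nat.floor_le hk0
      rw [le_div_iff₀ hδ] at h
      linarith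
    have hck1 : c < a + ((k:ℝ)+1)*δ := by
      have h : (c-a)/δ < (k:ℝ) + 1 := Nat.lt_floor_add_one _
      have h2 : c - a < ((k:ℝ)+1)*δ := by
        have h3 := mul_lt_mul_of_pos_right h hδ
        rw [div_mul_cancel₀ _ hδ.ne'] at h3
        exact h3
      linarith
    have hb2 : a + 2^n * δ = b := by rw [hdd]; field_simp; ring
    have hklt : k < 2^n := by
      have h2 : (k:ℝ)*δ ≤ c - a := by
        have h := Nat.floor_le hk0
        rw [le_div_iff₀ hδ] at h
        linarith
      have h3 : (k:ℝ)*δ < 2^n * δ := by linarith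
      have h4 : (k:ℝ) < 2^n := lt_of_mul_lt_mul_right h3 hδ.le
      exact_mod_cast h4
    have hup : f d - f c ≤ 2 * ((1+M⁻¹)⁻¹)^n * (f b - f a) := by
      obtain ⟨-, hdy1⟩ := wu_dyadic M hM f hmono hqs n a b hab k hklt
      have e1 : a + ((k:ℝ)+1)*(b-a)/2^n = a + ((k:ℝ)+1)*δ := by rw [hdd, mul_div_assoc]
      have e2 : a + (k:ℝ)*(b-a)/2^n = a + (k:ℝ)*δ := by rw [hdd, mul_div_assoc]
      rw [e1, e2] at hdy1
      have hlamn : (0:ℝ) < ((1+M⁻¹)⁻¹)^n * (f b - f a) := by positivity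
      by_cases hcase : d ≤ a + ((k:ℝ)+1)*δ
      · have m1 : f d ≤ f (a + ((k:ℝ)+1)*δ) := hmono.monotone hcase
        have m2 : f (a + (k:ℝ)*δ) ≤ f c := hmono.monotone hck
        linarith
      · push_neg at hcase
        have hklt2 : k + 1 < 2^n := by
          have h2 : ((k:ℝ)+1)*δ < 2^n * δ := by linarith
          have h3 : (k:ℝ)+1 < 2^n := lt_of_mul_lt_mul_right h2 hδ.le
          exact_mod_cast h3
        obtain ⟨-, hdy2⟩ := wu_dyadic M hM f hmono hqs n a b hab (k+1) hklt2
        have e3 : a + ((((k:ℕ)+1):ℕ):ℝ)*(b-a)/2^n = a + ((k:ℝ)+1)*δ := by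
          push_cast; rw [hdd, mul_div_assoc]
        have e4 : a + (((((k:ℕ)+1):ℕ):ℝ)+1)*(b-a)/2^n = a + ((k:ℝ)+2)*δ := by
          push_cast; rw [hdd, mul_div_assoc]; ring_nf
        rw [e3, e4] at hdy2
        have m1 : f d ≤ f (a + ((k:ℝ)+2)*δ) := by
          apply hmono.monotone
          have : d ≤ c + δ := by linarith
          linarith
        have m2 : f (a + (k:ℝ)*δ) ≤ f c := hmono.monotone hck
        linarith
    have hlamconv : ((1+M⁻¹)⁻¹)^n = ((1:ℝ)/2^n)^p := by rw [← h2p]; exact wu_conv p n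
    have hstep : ((1:ℝ)/2^n)^p ≤ 2 * t^p := by
      have h1 : (1:ℝ)/2^n ≤ 2*t := by
        have h2 : (1:ℝ)/2^n = 2*(1/2^(n+1)) := by
          rw [pow_succ]; field_simp
        rw [h2]; linarith
      calc ((1:ℝ)/2^n)^p ≤ (2*t)^p := Real.rpow_le_rpow (by positivity) h1 hp0.le
        _ = (2:ℝ)^p * t^p := Real.mul_rpow (by norm_num) ht0.le
        _ ≤ 2 * t^p := by
            have h3 : (2:ℝ)^p ≤ 2^(1:ℝ) := Real.rpow_le_rpow_of_exponent_le one_le_two hp1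
            rw [Real.rpow_one] at h3
            have h4 : (0:ℝ) ≤ t^p := Real.rpow_nonneg ht0.le p
            nlinarith
    rw [div_le_iff₀ hT]
    calc f d - f c ≤ 2 * ((1+M⁻¹)⁻¹)^n * (f b - f a) := hup
      _ = 2 * (((1:ℝ)/2^n)^p) * (f b - f a) := by rw [hlamconv]
      _ ≤ 2 * (2 * t^p) * (f b - f a) :=
          mul_le_mul_of_nonneg_right (by linarith [hstep]) hT.le
      _ = 4 * t^p * (f b - f a) := by ring
end

section
/- For every positive integer $m$ and every real $x$ with $0 < x < 1 - \sqrt[m]{\frac{m}{m+1}}$, one has $1 - mx \ge (1-x)^{m+1}$. -/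
/-- For every positive integer `m` and real `x` with
`0 < x < 1 - (m/(m+1))^(1/m)`, one has `1 - m x ≥ (1-x)^(m+1)`. -/
theorem stmt6 (m : ℕ) (hm : 1 ≤ m) (x : ℝ) (hx : 0 < x)
    (hx' : x < 1 - ((m : ℝ) / (m + 1)) ^ ((1 : ℝ) / m)) :
    (1 - x) ^ (m + 1) ≤ 1 - m * x := by
  set y : ℝ := 1 - x with hy
  set b : ℝ := ((m : ℝ) / (m + 1)) ^ ((1 : ℝ) / m) with hb
  have hm0 : (0 : ℝ) < m := by exact_mod_cast hm
  have hq : (0 : ℝ) < (m : ℝ) / (m + 1) := by positivity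
  have hbpos : 0 < b := Real.rpow_pos_of_pos hq _
  have hby : b < y := by simp only [hy]; linarith
  have hy0 : 0 < y := hbpos.trans hby
  have hy1 : y ≤ 1 := by simp only [hy]; linarith
  -- b ^ m = m / (m+1)
  have hbm : b ^ m = (m : ℝ) / (m + 1) := by
    rw [hb, ← Real.rpow_natCast (((m : ℝ) / (m + 1)) ^ ((1 : ℝ) / m)) m,
      ← Real.rpow_mul hq.le]
    rw [one_div, inv_mul_cancel₀ (by exact_mod_cast hm0.ne'), Real.rpow_one]
  have hym : (m : ℝ) / (m + 1) ≤ y ^ m := by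
    rw [← hbm]; exact pow_le_pow_left₀ hbpos.le hby.le m
  -- sum bound
  have hsum : (m : ℝ) ≤ ∑ i ∈ Finset.range (m + 1), y ^ i := by
    have h1 : (m + 1 : ℝ) * y ^ m ≤ ∑ i ∈ Finset.range (m + 1), y ^ i := by
      have := Finset.card_nsmul_le_sum (Finset.range (m + 1)) (fun i => y ^ i) (y ^ m)
        (fun i hi => pow_le_pow_of_le_one hy0.le hy1 (Nat.lt_succ_iff.mp (Finset.mem_range.mp hi)))
      simpa [nsmul_eq_mul] using this
    have h2 : (m : ℝ) ≤ (m + 1 : ℝ) * y ^ m := by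
      calc (m : ℝ) = (m + 1) * ((m : ℝ) / (m + 1)) := by field_simp
        _ ≤ (m + 1) * y ^ m := by
            apply mul_le_mul_of_nonneg_left hym (by positivity)
    linarith
  have hgeom : (1 - y) * ∑ i ∈ Finset.range (m + 1), y ^ i = 1 - y ^ (m + 1) := by
    have := geom_sum_mul y (m + 1)
    nlinarith [this]
  have hxy : 1 - y = x := by simp [hy]
  have : (m : ℝ) * x ≤ 1 - y ^ (m + 1) := by
    calc (m : ℝ) * x = x * (m : ℝ) := mul_comm _ _
      _ ≤ x * ∑ i ∈ Finset.range (m + 1), y ^ i :=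
          mul_le_mul_of_nonneg_left hsum hx.le
      _ = (1 - y) * ∑ i ∈ Finset.range (m + 1), y ^ i := by rw [hxy]
      _ = 1 - y ^ (m + 1) := hgeom
  linarith
end

section
/- Let $A\in(0,1]$, $0<d<1$, $n\ge 1$, and let $x_1,\dots,x_n\in[A,1]$. Then $\frac{1+x_1^d+\cdots+x_n^d}{(1+x_1+\cdots+x_n)^d} \ge (1+A)^{1-d}$. -/
open Finset

/-- For `A ∈ (0,1]`, `0 < d < 1`, `n ≥ 1`, and `x₁,…,xₙ ∈ [A,1]`:
`(1 + ∑ xᵢ^d) / (1 + ∑ xᵢ)^d ≥ (1+A)^(1-d)`. -/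
theorem stmt10 (A d : ℝ) (hA : 0 < A) (hA1 : A ≤ 1) (hd : 0 < d) (hd1 : d < 1)
    (n : ℕ) (hn : 1 ≤ n) (x : Fin n → ℝ) (hx : ∀ i, A ≤ x i ∧ x i ≤ 1) :
    (1 + A) ^ (1 - d) ≤
      (1 + ∑ i, (x i) ^ d) / (1 + ∑ i, x i) ^ d := by
  set S := ∑ i, x i with hS
  have hxpos : ∀ i, 0 < x i := fun i => lt_of_lt_of_le hA (hx i).1
  have hSA : A ≤ S := by
    have h1 : (n : ℝ) * A ≤ S := by
      rw [hS]
      calc (n : ℝ) * A = ∑ _i : Fin n, A := by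
            simp [mul_comm]
        _ ≤ ∑ i, x i := Finset.sum_le_sum fun i _ => (hx i).1
    have : A ≤ (n : ℝ) * A := by
      have hn1 : (1:ℝ) ≤ (n:ℝ) := by exact_mod_cast hn
      nlinarith
    linarith
  have hSpos : (0:ℝ) < 1 + S := by linarith
  have hTS : S ≤ ∑ i, (x i) ^ d := by
    rw [hS]
    apply Finset.sum_le_sum
    intro i _
    calc x i = x i ^ (1:ℝ) := (Real.rpow_one _).symm
      _ ≤ x i ^ d := Real.rpow_le_rpow_of_exponent_ge (hxpos i) (hx i).2 hd1.le
  rw [le_div_iff₀ (Real.rpow_pos_of_pos hSpos d)]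
  calc (1 + A) ^ (1 - d) * (1 + S) ^ d
      ≤ (1 + S) ^ (1 - d) * (1 + S) ^ d := by
        gcongr
    _ = (1 + S) := by
        rw [← Real.rpow_add hSpos]; simp
    _ ≤ 1 + ∑ i, (x i) ^ d := by linarith
end
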